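/- Over K = ℝ{{t}} (real Puiseux series with the t-adic absolute value) considered with the trivial absolute value on K, the map ||·||^sgn : K² → ℝ defined by ||(x,y)||^sgn = sgn(x) if |x|_t ≥ |y|_t and sgn(y) otherwise, is a signed seminorm with respect to the trivial absolute value, but it is not diagonalizable: there is no ordered basis B of K² and no c_1 ≥ c_2 ≥ 0 with ||·||^sgn = ||·||_{B,c}. -/

import Mathlib

noncomputable section

variable {K : Type*} [Field K] [LinearOrder K] [IsStrictOrderedRing K] {V : Type*} [AddCommGroup V] [Module K V]

/-- The sign of an element of a linear ordered field, as a real number. -/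
def sgn (x : K) : ℝ := if 0 < x then 1 else if x < 0 then -1 else 0

/-- The trivial absolute value. -/
def trivabs (x : K) : ℝ := if x = 0 then 0 else 1

/-- `K` is real closed. -/
def IsRealClosedOrd (K : Type*) [Field K] [LinearOrder K] [IsStrictOrderedRing K] : Prop :=
  (∀ x : K, 0 ≤ x → ∃ y, y * y = x) ∧
  ∀ p : Polynomial K, Odd p.natDegree → ∃ x, p.eval x = 0

/-- A signed seminorm on `V` with respect to the trivial absolute value on `K`
(note `sgn c * trivabs c = sgn c`). -/
def IsSignedSeminormTriv (N : V → ℝ) : Prop :=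
  (∀ (c : K) (v : V), N (c • v) = sgn c * N v) ∧
  (∀ v w : V, min (N v) (N w) ≤ N (v + w) ∧ N (v + w) ≤ max (N v) (N w))

/-- `av` is a non-Archimedean absolute value. -/
def IsNonarch (av : AbsoluteValue K ℝ) : Prop := ∀ x y : K, av (x + y) ≤ max (av x) (av y)

/-- `av` is compatible with the order on `K`. -/
def Compat (av : AbsoluteValue K ℝ) : Prop :=
  (∀ x y : K, 0 ≤ x → x ≤ y → av x ≤ av y) ∧
  (∀ x y : K, av y < av x → sgn (x + y) = sgn x)

/-- `j` is the minimal index at which `a (lam j) * c j` attains its maximum. -/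
def DiagAt {n : ℕ} (a : K → ℝ) (lam : Fin n → K) (c : Fin n → ℝ) (j : Fin n) : Prop :=
  (∀ i, a (lam i) * c i ≤ a (lam j) * c j) ∧
  (∀ i, i < j → a (lam i) * c i < a (lam j) * c j)

variable (av : AbsoluteValue K ℝ)

lemma sgn_pos {x : K} (h : 0 < x) : sgn x = 1 := by simp [sgn, h]
lemma sgn_neg' {x : K} (h : x < 0) : sgn x = -1 := by simp [sgn, h, not_lt.2 h.le]
lemma sgn_zero : sgn (0 : K) = 0 := by simp [sgn]
lemma sgn_zero' {x : K} (h : x = 0) : sgn x = 0 := by simp [sgn, h]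
lemma sgn_pos_iff {x : K} : 0 < sgn x ↔ 0 < x := by
  rcases lt_trichotomy x 0 with h | h | h <;>
    simp [sgn_pos, sgn_neg', sgn_zero', h, h.le, not_lt.2 h.le, h.not_gt] <;> norm_num
lemma sgn_neg_iff {x : K} : sgn x < 0 ↔ x < 0 := by
  rcases lt_trichotomy x 0 with h | h | h <;>
    simp [sgn_pos, sgn_neg', sgn_zero', h, h.le, not_lt.2 h.le, h.not_gt] <;> norm_num
lemma sgn_nonpos_iff {x : K} : sgn x ≤ 0 ↔ x ≤ 0 := by
  rw [← not_lt, ← not_lt, sgn_pos_iff]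
lemma sgn_nonneg_iff {x : K} : 0 ≤ sgn x ↔ 0 ≤ x := by
  rw [← not_lt, ← not_lt, sgn_neg_iff]
lemma sgn_mul (x y : K) : sgn (x * y) = sgn x * sgn y := by
  rcases lt_trichotomy x 0 with h | h | h <;> rcases lt_trichotomy y 0 with h' | h' | h' <;>
    simp [sgn_pos, sgn_neg', sgn_zero', h, h', mul_pos, mul_pos_of_neg_of_neg,
      mul_neg_of_pos_of_neg, mul_neg_of_neg_of_pos]
lemma sgn_neg (x : K) : sgn (-x) = - sgn x := by
  rcases lt_trichotomy x 0 with h | h | h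
  · rw [sgn_pos (neg_pos.2 h), sgn_neg' h]; ring
  · simp [h, sgn_zero]
  · rw [sgn_neg' (neg_neg_iff_pos.2 h), sgn_pos h]
lemma sgn_mem {x : K} : sgn x = -1 ∨ sgn x = 0 ∨ sgn x = 1 := by
  unfold sgn; split_ifs <;> simp

variable (av : AbsoluteValue K ℝ)

lemma av_ultra (hna : IsNonarch av) {x y : K} (h : av y < av x) : av (x + y) = av x := by
  refine le_antisymm ((hna x y).trans (max_le le_rfl h.le)) ?_
  have h2 : av x ≤ max (av (x + y)) (av y) := by
    simpa [av.map_neg] using hna (x + y) (-y)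
  rcases max_cases (av (x + y)) (av y) with ⟨he, _⟩ | ⟨he, _⟩
  · rw [he] at h2; exact h2
  · rw [he] at h2; linarith
lemma av_add_eq_max (hna : IsNonarch av) {x y : K} (h : av x ≠ av y) :
    av (x + y) = max (av x) (av y) := by
  rcases h.lt_or_gt with h | h
  · rw [max_eq_right h.le, add_comm]; exact av_ultra av hna h
  · rw [max_eq_left h.le]; exact av_ultra av hna h
lemma av_mono_neg (hcomp : Compat av) {x y : K} (h0 : x ≤ 0) (h : y ≤ x) : av x ≤ av y := by
  have := hcomp.1 (-x) (-y) (by linarith) (by linarith)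
  simpa [av.map_neg] using this
lemma sgn_add_of_lt (hcomp : Compat av) {x y : K} (h : av y < av x) :
    sgn (x + y) = sgn x := hcomp.2 x y h

/-- The signed seminorm under study. -/
def NN (av : AbsoluteValue K ℝ) (p : K × K) : ℝ :=
  if av p.2 ≤ av p.1 then sgn p.1 else sgn p.2

lemma NN_pos_iff {x y : K} :
    0 < NN av (x, y) ↔ (av y ≤ av x ∧ 0 < x) ∨ (¬ av y ≤ av x ∧ 0 < y) := by
  unfold NN; split_ifs with h <;> simp [h, sgn_pos_iff]
lemma NN_nonpos_iff {x y : K} :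
    NN av (x, y) ≤ 0 ↔ (av y ≤ av x ∧ x ≤ 0) ∨ (¬ av y ≤ av x ∧ y ≤ 0) := by
  unfold NN; split_ifs with h <;> simp [h, sgn_nonpos_iff]
lemma NN_mem (p : K × K) : NN av p = -1 ∨ NN av p = 0 ∨ NN av p = 1 := by
  unfold NN; split_ifs <;> exact sgn_mem

section Claims

lemma helperA1 (hna : IsNonarch av) (hcomp : Compat av) {x1 y1 x2 y2 : K} (hx : av x2 < av x1)
    (D1 : (av y1 ≤ av x1 ∧ x1 ≤ 0) ∨ (¬ av y1 ≤ av x1 ∧ y1 ≤ 0))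
    (D2 : (av y2 ≤ av x2 ∧ x2 ≤ 0) ∨ (¬ av y2 ≤ av x2 ∧ y2 ≤ 0))
    (hY : av (y1 + y2) ≤ av (x1 + x2)) (hpos : 0 < x1 + x2) : False := by
  have hax : av (x1 + x2) = av x1 := av_ultra av hna hx
  have hx1 : 0 < x1 := by
    have := hcomp.2 x1 x2 hx
    rw [← sgn_pos_iff (x := x1), ← this, sgn_pos_iff]; exact hpos
  rcases D1 with ⟨_, h⟩ | ⟨hn, hy1⟩
  · linarith
  push_neg at hn
  have hy1ne : y1 ≠ 0 := by
    intro h; rw [h, av.map_zero] at hn; exact absurd (av.nonneg x1) (not_le.2 hn)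
  have hy1' : y1 < 0 := lt_of_le_of_ne hy1 hy1ne
  have h12 : av (y1 + y2) < av y1 := lt_of_le_of_lt (hY.trans_eq hax) hn
  have heq : av y2 = av y1 := by
    by_contra hne
    have h3 := av_add_eq_max av hna (fun h => hne h.symm)
    rw [h3] at h12
    exact absurd (le_max_left (av y1) (av y2)) (not_le.2 h12)
  rcases D2 with ⟨h2a, _⟩ | ⟨_, hy2⟩
  · rw [heq] at h2a; linarith [lt_trans hx hn]
  · have : av y1 ≤ av (y1 + y2) :=
      av_mono_neg av hcomp hy1'.le (by linarith)
    linarith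

lemma helperA2 (hna : IsNonarch av) (hcomp : Compat av) {x1 y1 x2 y2 : K} (hx : av x1 = av x2) (hx1 : 0 < x1)
    (D1 : (av y1 ≤ av x1 ∧ x1 ≤ 0) ∨ (¬ av y1 ≤ av x1 ∧ y1 ≤ 0))
    (D2 : (av y2 ≤ av x2 ∧ x2 ≤ 0) ∨ (¬ av y2 ≤ av x2 ∧ y2 ≤ 0))
    (hY : av (y1 + y2) ≤ av (x1 + x2)) : False := by
  rcases D1 with ⟨_, h⟩ | ⟨hn, hy1⟩
  · linarith
  push_neg at hn
  have hy1ne : y1 ≠ 0 := by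
    intro h; rw [h, av.map_zero] at hn; exact absurd (av.nonneg x1) (not_le.2 hn)
  have hy1' : y1 < 0 := lt_of_le_of_ne hy1 hy1ne
  have hxx : av (x1 + x2) ≤ av x1 := by
    refine (hna x1 x2).trans ?_
    rw [← hx, max_self]
  rcases D2 with ⟨h2a, _⟩ | ⟨_, hy2⟩
  · have hne : av y1 ≠ av y2 := by rw [← hx] at h2a; intro h; rw [h] at hn; linarith
    have := av_add_eq_max av hna hne
    have h1 : av y1 ≤ av (y1 + y2) := this ▸ le_max_left _ _
    linarith
  · have : av y1 ≤ av (y1 + y2) := av_mono_neg av hcomp hy1'.le (by linarith)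
    linarith

lemma helperB1 (hna : IsNonarch av) (hcomp : Compat av) {x1 y1 x2 y2 : K} (hy : av y2 < av y1)
    (D1 : (av y1 ≤ av x1 ∧ x1 ≤ 0) ∨ (¬ av y1 ≤ av x1 ∧ y1 ≤ 0))
    (D2 : (av y2 ≤ av x2 ∧ x2 ≤ 0) ∨ (¬ av y2 ≤ av x2 ∧ y2 ≤ 0))
    (hX : av (x1 + x2) < av (y1 + y2)) (hpos : 0 < y1 + y2) : False := by
  have hay : av (y1 + y2) = av y1 := av_ultra av hna hy
  have hy1 : 0 < y1 := by
    have := hcomp.2 y1 y2 hy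
    rw [← sgn_pos_iff (x := y1), ← this, sgn_pos_iff]; exact hpos
  rcases D1 with ⟨h1a, hx1⟩ | ⟨_, h⟩
  swap
  · linarith
  have hx1' : x1 < 0 := by
    rcases lt_or_eq_of_le hx1 with h | h
    · exact h
    · rw [h, av.map_zero] at h1a
      exact absurd h1a (not_le.2 (av.pos hy1.ne'))
  have hlt : av (x1 + x2) < av x1 := by rw [hay] at hX; linarith
  have heq : av x2 = av x1 := by
    by_contra hne
    have h3 := av_add_eq_max av hna (fun h => hne h.symm)
    rw [h3] at hlt
    exact absurd (le_max_left (av x1) (av x2)) (not_le.2 hlt)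
  rcases D2 with ⟨_, hx2⟩ | ⟨hn2, _⟩
  · have : av x1 ≤ av (x1 + x2) := av_mono_neg av hcomp hx1'.le (by linarith)
    linarith
  · push_neg at hn2; rw [heq] at hn2; linarith

lemma helperB2 (hna : IsNonarch av) (hcomp : Compat av) {x1 y1 x2 y2 : K} (hy : av y1 = av y2) (hy1 : 0 < y1)
    (D1 : (av y1 ≤ av x1 ∧ x1 ≤ 0) ∨ (¬ av y1 ≤ av x1 ∧ y1 ≤ 0))
    (D2 : (av y2 ≤ av x2 ∧ x2 ≤ 0) ∨ (¬ av y2 ≤ av x2 ∧ y2 ≤ 0))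
    (hX : av (x1 + x2) < av (y1 + y2)) : False := by
  rcases D1 with ⟨h1a, hx1⟩ | ⟨_, h⟩
  swap
  · linarith
  have hx1' : x1 < 0 := by
    rcases lt_or_eq_of_le hx1 with h | h
    · exact h
    · rw [h, av.map_zero] at h1a
      exact absurd h1a (not_le.2 (av.pos hy1.ne'))
  have hyy : av (y1 + y2) ≤ av y1 := by
    refine (hna y1 y2).trans ?_
    rw [← hy, max_self]
  rcases D2 with ⟨_, hx2⟩ | ⟨hn2, _⟩
  · have : av x1 ≤ av (x1 + x2) := av_mono_neg av hcomp hx1'.le (by linarith)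
    linarith
  · push_neg at hn2
    rw [← hy] at hn2
    have hlt : av x2 < av x1 := lt_of_lt_of_le hn2 h1a
    have : av (x1 + x2) = av x1 := av_ultra av hna hlt
    linarith

lemma claimP (hna : IsNonarch av) (hcomp : Compat av) {x1 y1 x2 y2 : K} (h : 0 < NN av (x1 + x2, y1 + y2)) :
    0 < NN av (x1, y1) ∨ 0 < NN av (x2, y2) := by
  by_contra hc
  push_neg at hc
  obtain ⟨h1, h2⟩ := hc
  rw [NN_nonpos_iff] at h1 h2
  rw [NN_pos_iff] at h
  rcases h with ⟨hY, hpos⟩ | ⟨hX, hpos⟩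
  · rcases lt_trichotomy (av x2) (av x1) with hx | hx | hx
    · exact helperA1 av hna hcomp hx h1 h2 hY hpos
    · have hor : 0 < x1 ∨ 0 < x2 := by by_contra hq; push_neg at hq; linarith [hq.1, hq.2]
      rcases hor with h0 | h0
      · exact helperA2 av hna hcomp hx.symm h0 h1 h2 hY
      · refine helperA2 av hna hcomp hx h0 h2 h1 ?_
        rw [add_comm y2 y1, add_comm x2 x1]; exact hY
    · refine helperA1 av hna hcomp hx h2 h1 ?_ ?_
      · rw [add_comm y2 y1, add_comm x2 x1]; exact hY
      · rw [add_comm]; exact hpos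
  · push_neg at hX
    rcases lt_trichotomy (av y2) (av y1) with hy | hy | hy
    · exact helperB1 av hna hcomp hy h1 h2 hX hpos
    · have hor : 0 < y1 ∨ 0 < y2 := by by_contra hq; push_neg at hq; linarith [hq.1, hq.2]
      rcases hor with h0 | h0
      · exact helperB2 av hna hcomp hy.symm h0 h1 h2 hX
      · refine helperB2 av hna hcomp hy h0 h2 h1 ?_
        rw [add_comm y2 y1, add_comm x2 x1]; exact hX
    · refine helperB1 av hna hcomp hy h2 h1 ?_ ?_
      · rw [add_comm y2 y1, add_comm x2 x1]; exact hX
      · rw [add_comm]; exact hpos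

lemma helperM (hna : IsNonarch av) (hcomp : Compat av) {x1 y1 x2 y2 : K} (e1 : av y1 ≤ av x1) (e1' : 0 < x1)
    (e2 : av x2 < av y2) (e2' : 0 < y2) : 0 < NN av (x1 + x2, y1 + y2) := by
  rw [NN_pos_iff]
  rcases le_or_gt (av y2) (av x1) with h | h
  · left
    have hx2 : av x2 < av x1 := lt_of_lt_of_le e2 h
    have hax : av (x1 + x2) = av x1 := av_ultra av hna hx2
    constructor
    · refine le_trans ((hna y1 y2).trans ?_) hax.ge
      exact max_le e1 h
    · have := hcomp.2 x1 x2 hx2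
      rw [← sgn_pos_iff, this, sgn_pos_iff]; exact e1'
  · right
    have hy1 : av y1 < av y2 := lt_of_le_of_lt e1 h
    have hay : av (y1 + y2) = av y2 := by
      rw [add_comm]; exact av_ultra av hna hy1
    constructor
    · rw [not_le, hay]
      exact lt_of_le_of_lt (hna x1 x2) (max_lt h e2)
    · have := hcomp.2 y2 y1 hy1
      rw [add_comm, ← sgn_pos_iff, this, sgn_pos_iff]; exact e2'

lemma claimZ1 (hna : IsNonarch av) (hcomp : Compat av) {x1 y1 x2 y2 : K} (h1 : 0 < NN av (x1, y1)) (h2 : 0 < NN av (x2, y2)) :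
    0 < NN av (x1 + x2, y1 + y2) := by
  rw [NN_pos_iff] at h1 h2
  rcases h1 with ⟨e1, e1'⟩ | ⟨e1, e1'⟩ <;> rcases h2 with ⟨e2, e2'⟩ | ⟨e2, e2'⟩
  · rw [NN_pos_iff]
    left
    have hx1 : av x1 ≤ av (x1 + x2) := hcomp.1 x1 (x1 + x2) e1'.le (by linarith)
    have hx2 : av x2 ≤ av (x1 + x2) := by
      rw [add_comm]; exact hcomp.1 x2 (x2 + x1) e2'.le (by linarith)
    exact ⟨(hna y1 y2).trans (max_le (e1.trans hx1) (e2.trans hx2)), by linarith⟩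
  · push_neg at e2
    exact helperM av hna hcomp e1 e1' e2 e2'
  · push_neg at e1
    have := helperM av hna hcomp e2 e2' e1 e1'
    rw [add_comm x2 x1, add_comm y2 y1] at this
    exact this
  · push_neg at e1 e2
    rw [NN_pos_iff]
    right
    have hy1 : av y1 ≤ av (y1 + y2) := hcomp.1 y1 (y1 + y2) e1'.le (by linarith)
    have hy2 : av y2 ≤ av (y1 + y2) := by
      rw [add_comm]; exact hcomp.1 y2 (y2 + y1) e2'.le (by linarith)
    refine ⟨not_le.2 (lt_of_le_of_lt (hna x1 x2) (max_lt ?_ ?_)), by linarith⟩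
    · exact lt_of_lt_of_le e1 hy1
    · exact lt_of_lt_of_le e2 hy2

end Claims

lemma NN_smul (c : K) (p : K × K) : NN av (c • p) = sgn c * NN av p := by
  by_cases hc : c = 0
  · subst hc; rw [zero_smul, sgn_zero, zero_mul]
    unfold NN
    split_ifs <;> exact sgn_zero
  · unfold NN
    have h1 : (c • p).1 = c * p.1 := rfl
    have h2 : (c • p).2 = c * p.2 := rfl
    have hiff : av (c * p.2) ≤ av (c * p.1) ↔ av p.2 ≤ av p.1 := by
      rw [map_mul, map_mul]
      exact ⟨fun h => le_of_mul_le_mul_left h (av.pos hc),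
        fun h => mul_le_mul_of_nonneg_left h (av.nonneg c)⟩
    rw [h1, h2]
    by_cases h : av p.2 ≤ av p.1
    · rw [if_pos h, if_pos (hiff.2 h), sgn_mul]
    · rw [if_neg h, if_neg (fun hh => h (hiff.1 hh)), sgn_mul]

lemma NN_neg (p : K × K) : NN av (-p) = - NN av p := by
  have := NN_smul av (-1 : K) p
  rw [neg_one_smul, sgn_neg' (by norm_num : (-1 : K) < 0)] at this
  rw [this]; ring

lemma prodadd (p q : K × K) : p + q = (p.1 + q.1, p.2 + q.2) := rfl

lemma NN_F1 (hna : IsNonarch av) (hcomp : Compat av) (p q : K × K)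
    (h : 0 < NN av (p + q)) : 0 < NN av p ∨ 0 < NN av q := by
  rw [prodadd] at h
  have := claimP av hna hcomp h
  simpa only [Prod.mk.eta] using this

lemma NN_F2 (hna : IsNonarch av) (hcomp : Compat av) (p q : K × K)
    (h : NN av (p + q) < 0) : NN av p < 0 ∨ NN av q < 0 := by
  have h' : 0 < NN av ((-p) + (-q)) := by rw [← neg_add, NN_neg]; linarith
  rcases NN_F1 av hna hcomp _ _ h' with h'' | h''
  · left; rw [NN_neg] at h''; linarith
  · right; rw [NN_neg] at h''; linarith

lemma NN_F3 (hna : IsNonarch av) (hcomp : Compat av) (p q : K × K)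
    (h1 : 0 < NN av p) (h2 : 0 < NN av q) : 0 < NN av (p + q) := by
  rw [prodadd]
  refine claimZ1 av hna hcomp ?_ ?_ <;> simp only [Prod.mk.eta] <;> assumption

lemma NN_F4 (hna : IsNonarch av) (hcomp : Compat av) (p q : K × K)
    (h1 : NN av p < 0) (h2 : NN av q < 0) : NN av (p + q) < 0 := by
  have h1' : 0 < NN av (-p) := by rw [NN_neg]; linarith
  have h2' : 0 < NN av (-q) := by rw [NN_neg]; linarith
  have := NN_F3 av hna hcomp _ _ h1' h2'
  rw [← neg_add, NN_neg] at this
  linarith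

lemma NN_lower (hna : IsNonarch av) (hcomp : Compat av) (p q : K × K) :
    min (NN av p) (NN av q) ≤ NN av (p + q) := by
  by_contra hlt
  push_neg at hlt
  have h1 : NN av (p + q) < NN av p := lt_of_lt_of_le hlt (min_le_left _ _)
  have h2 : NN av (p + q) < NN av q := lt_of_lt_of_le hlt (min_le_right _ _)
  rcases NN_mem av (p + q) with hC | hC | hC
  · have hA : 0 ≤ NN av p := by
      rcases NN_mem av p with h' | h' | h'
      · exfalso; rw [h', hC] at h1; exact absurd h1 (lt_irrefl _)
      · rw [h']
      · rw [h']; norm_num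
    have hB : 0 ≤ NN av q := by
      rcases NN_mem av q with h' | h' | h'
      · exfalso; rw [h', hC] at h2; exact absurd h2 (lt_irrefl _)
      · rw [h']
      · rw [h']; norm_num
    rcases NN_F2 av hna hcomp p q (by rw [hC]; norm_num) with h' | h' <;> linarith
  · rw [hC] at h1 h2
    have := NN_F3 av hna hcomp p q h1 h2
    rw [hC] at this
    exact lt_irrefl _ this
  · have : NN av p ≤ 1 := by rcases NN_mem av p with h' | h' | h' <;> rw [h'] <;> norm_num
    rw [hC] at h1; linarith

lemma NN_upper (hna : IsNonarch av) (hcomp : Compat av) (p q : K × K) :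
    NN av (p + q) ≤ max (NN av p) (NN av q) := by
  by_contra hlt
  push_neg at hlt
  have h1 : NN av p < NN av (p + q) := lt_of_le_of_lt (le_max_left _ _) hlt
  have h2 : NN av q < NN av (p + q) := lt_of_le_of_lt (le_max_right _ _) hlt
  rcases NN_mem av (p + q) with hC | hC | hC
  · have : -1 ≤ NN av p := by rcases NN_mem av p with h' | h' | h' <;> rw [h'] <;> norm_num
    rw [hC] at h1; linarith
  · rw [hC] at h1 h2
    have := NN_F4 av hna hcomp p q h1 h2
    rw [hC] at this
    exact lt_irrefl _ this
  · have hA : NN av p ≤ 0 := by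
      rcases NN_mem av p with h' | h' | h'
      · rw [h']; norm_num
      · rw [h']
      · exfalso; rw [h', hC] at h1; exact absurd h1 (lt_irrefl _)
    have hB : NN av q ≤ 0 := by
      rcases NN_mem av q with h' | h' | h'
      · rw [h']; norm_num
      · rw [h']
      · exfalso; rw [h', hC] at h2; exact absurd h2 (lt_irrefl _)
    rcases NN_F1 av hna hcomp p q (by rw [hC]; norm_num) with h' | h' <;> linarith

lemma trivabs_le_one (x : K) : trivabs x ≤ 1 := by unfold trivabs; split_ifs <;> norm_num
lemma trivabs_nonneg (x : K) : 0 ≤ trivabs x := by unfold trivabs; split_ifs <;> norm_num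

lemma part2 (hna : IsNonarch av) (hcomp : Compat av)
    (hsmall : ∀ ε : ℝ, 0 < ε → ∃ x : K, x ≠ 0 ∧ av x < ε) :
    ¬ ∃ (B : Module.Basis (Fin 2) K (K × K)) (c : Fin 2 → ℝ), c 1 ≤ c 0 ∧ 0 ≤ c 1 ∧
        ∀ (v : K × K) (j : Fin 2), DiagAt trivabs (fun i => B.repr v i) c j →
          (if av v.2 ≤ av v.1 then sgn v.1 else sgn v.2) = sgn (B.repr v j) * c j := by
  rintro ⟨B, c, hc10, hc1, H⟩
  have hc0 : (0 : ℝ) ≤ c 0 := le_trans hc1 hc10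
  have e0 : B.repr (B 0) 0 = 1 := by simp
  have e1 : B.repr (B 0) 1 = 0 := by
    rw [Module.Basis.repr_self]
    exact Finsupp.single_eq_of_ne (by decide)
  have hnotlt : ∀ i : Fin 2, ¬ i < 0 := by decide
  -- c 0 is a value of the map, hence in {-1,0,1}; since ≥ 0, c 0 ∈ {0,1}
  have hB0 : DiagAt trivabs (fun i => B.repr (B 0) i) c 0 := by
    refine ⟨fun i => ?_, fun i hi => absurd hi (hnotlt i)⟩
    rcases (by decide : ∀ i : Fin 2, i = 0 ∨ i = 1) i with rfl | rfl
    · exact le_rfl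
    · simpa [e1, e0, trivabs] using hc0
  have hval := H (B 0) 0 hB0
  rw [e0, sgn_pos one_pos, one_mul] at hval
  have hmem : c 0 = -1 ∨ c 0 = 0 ∨ c 0 = 1 := by
    rw [← hval]; exact NN_mem av (B 0)
  rcases hmem with h | h | hc0one
  · linarith
  · -- c 0 = 0, so c 1 = 0 and the map is identically 0, contradiction at (1,0)
    have hc1z : c 1 = 0 := le_antisymm (hc10.trans_eq h) hc1
    have hD : DiagAt trivabs (fun i => B.repr ((1 : K), (0 : K)) i) c 0 := by
      refine ⟨fun i => ?_, fun i hi => absurd hi (hnotlt i)⟩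
      rcases (by decide : ∀ i : Fin 2, i = 0 ∨ i = 1) i with rfl | rfl
      · exact le_rfl
      · simp only [h, hc1z, mul_zero, le_refl]
    have h2 := H ((1 : K), (0 : K)) 0 hD
    rw [h, mul_zero] at h2
    rw [if_pos (by rw [show (((1:K),(0:K)) : K × K).2 = 0 from rfl, map_zero]; exact av.nonneg _)] at h2
    rw [show (((1:K),(0:K)) : K × K).1 = 1 from rfl, sgn_pos one_pos] at h2
    norm_num at h2
  · -- c 0 = 1
    have key : ∀ v : K × K, B.repr v 0 ≠ 0 →
        (if av v.2 ≤ av v.1 then sgn v.1 else sgn v.2) = sgn (B.repr v 0) := by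
      intro v hv
      have ht : trivabs (B.repr v 0) = 1 := by unfold trivabs; rw [if_neg hv]
      have hD : DiagAt trivabs (fun i => B.repr v i) c 0 := by
        refine ⟨fun i => ?_, fun i hi => absurd hi (hnotlt i)⟩
        rcases (by decide : ∀ i : Fin 2, i = 0 ∨ i = 1) i with rfl | rfl
        · exact le_rfl
        · simp only [ht, one_mul, hc0one]
          exact mul_le_one₀ (trivabs_le_one _) hc1 (hc10.trans_eq hc0one)
      have := H v 0 hD
      rwa [hc0one, mul_one] at this
    set a := B.repr ((1 : K), (0 : K)) 0 with ha
    set b := B.repr ((0 : K), (1 : K)) 0 with hb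
    have hrepr : ∀ x y : K, B.repr ((x, y) : K × K) 0 = x * a + y * b := by
      intro x y
      have hxy : ((x, y) : K × K) = x • ((1 : K), (0 : K)) + y • ((0 : K), (1 : K)) := by
        simp [Prod.ext_iff]
      rw [hxy, map_add, map_smul, map_smul]
      simp [smul_eq_mul, ha, hb]
    have hab : ¬ (a = 0 ∧ b = 0) := by
      rintro ⟨ha0, hb0⟩
      have h2 := hrepr (B 0).1 (B 0).2
      rw [ha0, hb0, mul_zero, mul_zero, add_zero, Prod.mk.eta, e0] at h2
      norm_num at h2
    obtain ⟨u, hu, hu1⟩ := hsmall 1 one_pos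
    have huu : 0 < u * u := mul_self_pos.2 hu
    have havuu : av (u * u) < 1 := by
      rw [map_mul]; nlinarith [av.nonneg u]
    have hva : a ≠ 0 → 0 < a := by
      intro ha0
      have hr : B.repr ((1 : K), (0 : K)) 0 = a := by rw [hrepr]; ring
      have hk := key ((1 : K), (0 : K)) (by rw [hr]; exact ha0)
      rw [hr, if_pos (by rw [show (((1:K),(0:K)) : K × K).2 = 0 from rfl, map_zero]; exact av.nonneg _)] at hk
      rw [show (((1:K),(0:K)) : K × K).1 = 1 from rfl, sgn_pos one_pos] at hk
      rw [← sgn_pos_iff, ← hk]; norm_num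
    have hvb : b ≠ 0 → 0 < b := by
      intro hb0
      have hr : B.repr ((0 : K), (1 : K)) 0 = b := by rw [hrepr]; ring
      have hk := key ((0 : K), (1 : K)) (by rw [hr]; exact hb0)
      rw [hr, if_neg (by
        rw [show (((0:K),(1:K)) : K × K).2 = 1 from rfl,
          show (((0:K),(1:K)) : K × K).1 = 0 from rfl, map_zero, map_one]
        norm_num)] at hk
      rw [show (((0:K),(1:K)) : K × K).2 = 1 from rfl, sgn_pos one_pos] at hk
      rw [← sgn_pos_iff, ← hk]; norm_num
    by_cases haz : a = 0
    · have hbz : b ≠ 0 := fun hh => hab ⟨haz, hh⟩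
      have hbpos := hvb hbz
      have hr : B.repr ((-1 : K), u * u) 0 = u * u * b := by rw [hrepr, haz]; ring
      have hposr : 0 < u * u * b := mul_pos huu hbpos
      have hk := key ((-1 : K), u * u) (by rw [hr]; exact hposr.ne')
      rw [hr, sgn_pos hposr] at hk
      rw [if_pos (by
        rw [show (((-1:K), u*u) : K × K).2 = u*u from rfl,
          show (((-1:K), u*u) : K × K).1 = -1 from rfl, av.map_neg, map_one]
        exact havuu.le)] at hk
      rw [show (((-1:K), u*u) : K × K).1 = -1 from rfl, sgn_neg' (by norm_num : (-1:K) < 0)] at hk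
      norm_num at hk
    · by_cases hbz : b = 0
      · have hapos := hva haz
        have hr : B.repr ((u * u : K), (-1 : K)) 0 = u * u * a := by rw [hrepr, hbz]; ring
        have hposr : 0 < u * u * a := mul_pos huu hapos
        have hk := key ((u * u : K), (-1 : K)) (by rw [hr]; exact hposr.ne')
        rw [hr, sgn_pos hposr] at hk
        rw [if_neg (by
          rw [show (((u*u : K), (-1:K)) : K × K).2 = -1 from rfl,
            show (((u*u : K), (-1:K)) : K × K).1 = u*u from rfl, av.map_neg, map_one]
          exact not_le.2 havuu)] at hk
        rw [show (((u*u : K), (-1:K)) : K × K).2 = -1 from rfl,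
          sgn_neg' (by norm_num : (-1:K) < 0)] at hk
        norm_num at hk
      · have hapos := hva haz
        have hbpos := hvb hbz
        have hwpos : (0 : K) < 1 + u * u := by nlinarith
        have havw : av (1 + u * u) = 1 := by
          refine le_antisymm ((hna 1 (u * u)).trans ?_) ?_
          · rw [map_one]; exact max_le le_rfl havuu.le
          · have h3 := hcomp.1 1 (1 + u * u) zero_le_one (by nlinarith)
            rwa [map_one] at h3
        rcases le_or_gt (av a) (av b) with hab2 | hab2
        · have hr : B.repr ((b : K), -(a * (1 + u * u))) 0 = -(a * b * (u * u)) := by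
            rw [hrepr]; ring
          have hposr : 0 < a * b * (u * u) := mul_pos (mul_pos hapos hbpos) huu
          have hk := key ((b : K), -(a * (1 + u * u))) (by rw [hr]; exact neg_ne_zero.2 hposr.ne')
          rw [hr, sgn_neg' (neg_neg_iff_pos.2 hposr |>.trans_le le_rfl)] at hk
          rw [if_pos (by
            rw [show (((b : K), -(a * (1 + u*u))) : K × K).2 = -(a * (1+u*u)) from rfl,
              show (((b : K), -(a * (1 + u*u))) : K × K).1 = b from rfl,
              av.map_neg, map_mul, havw, mul_one]
            exact hab2)] at hk
          rw [show (((b : K), -(a * (1 + u*u))) : K × K).1 = b from rfl, sgn_pos hbpos] at hk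
          norm_num at hk
        · have hr : B.repr ((b * (1 + u * u) : K), -a) 0 = a * b * (u * u) := by
            rw [hrepr]; ring
          have hposr : 0 < a * b * (u * u) := mul_pos (mul_pos hapos hbpos) huu
          have hk := key ((b * (1 + u * u) : K), -a) (by rw [hr]; exact hposr.ne')
          rw [hr, sgn_pos hposr] at hk
          rw [if_neg (by
            rw [show (((b * (1 + u*u) : K), -a) : K × K).2 = -a from rfl,
              show (((b * (1 + u*u) : K), -a) : K × K).1 = b * (1 + u*u) from rfl,
              av.map_neg, map_mul, havw, mul_one]
            exact not_le.2 hab2)] at hk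
          rw [show (((b * (1 + u*u) : K), -a) : K × K).2 = -a from rfl,
            sgn_neg' (neg_neg_iff_pos.2 hapos)] at hk
          norm_num at hk

/-- Over the real closed field of real Puiseux series `K = ℝ{{t}}` — here
axiomatized as a real closed field with a compatible non-Archimedean `t`-adic
absolute value `av` taking nonzero values arbitrarily close to `0` — considered
with the TRIVIAL absolute value, the map `(x,y) ↦ sgn x` if `av y ≤ av x`, else
`sgn y`, is a signed seminorm which is not diagonalizable. -/
theorem not_diagonalizable_example
    (hK : IsRealClosedOrd K) (av : AbsoluteValue K ℝ) (hna : IsNonarch av) (hcomp : Compat av)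
    (hsmall : ∀ ε : ℝ, 0 < ε → ∃ x : K, x ≠ 0 ∧ av x < ε) :
    IsSignedSeminormTriv (K := K)
      (fun p : K × K => if av p.2 ≤ av p.1 then sgn p.1 else sgn p.2) ∧
    ¬ ∃ (B : Module.Basis (Fin 2) K (K × K)) (c : Fin 2 → ℝ), c 1 ≤ c 0 ∧ 0 ≤ c 1 ∧
        ∀ (v : K × K) (j : Fin 2), DiagAt trivabs (fun i => B.repr v i) c j →
          (if av v.2 ≤ av v.1 then sgn v.1 else sgn v.2) = sgn (B.repr v j) * c j := by
  refine ⟨⟨fun cc v => NN_smul av cc v,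
    fun v w => ⟨NN_lower av hna hcomp v w, NN_upper av hna hcomp v w⟩⟩,
    part2 av hna hcomp hsmall⟩
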